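/- The following identity holds in the ring ℤ⟦q⟧ of formal power series: ∑_{π ∈ D} (−1)^{⌈E⌉(π)} q^{O(π)} = ∏_{i≥0} (1 + q^{4i+1})(1 − q^{4i+3}), where the sum runs over all partitions into distinct parts; i.e., for every n ≥ 0, the signed count ∑_{π ∈ D, O(π)=n} (−1)^{⌈E⌉(π)} (a finite sum) equals the coefficient of q^n in (−q; q⁴)_∞ (q³; q⁴)_∞. -/

import Mathlib

/-- Sum of `f` over the entries of a list at even 0-based positions, i.e. over the
odd-indexed parts `λ1, λ3, λ5, …` of a partition `(λ1, λ2, λ3, …)`. -/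
def sumAlt (f : ℕ → ℕ) : List ℕ → ℕ
  | [] => 0
  | [a] => f a
  | a :: _ :: l => f a + sumAlt f l

/-- `O(π) = λ1 + λ3 + λ5 + ⋯`, the sum of the odd-indexed parts. -/
def Osum (l : List ℕ) : ℕ := sumAlt id l

/-- `E(π) = λ2 + λ4 + λ6 + ⋯`, the sum of the even-indexed parts. -/
def Esum (l : List ℕ) : ℕ := sumAlt id l.tail

/-- `γ(π) = λ1 − λ2 + λ3 − λ4 + ⋯ = O(π) − E(π)`, the alternating sum of the parts.
For a weakly decreasing list we have `Osum l ≥ Esum l`, so natural subtraction is exact. -/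
def gammaSum (l : List ℕ) : ℕ := Osum l - Esum l

/-- `⌈O⌉(π) = ∑ ⌈λ_{2i−1}/2⌉`. -/
def ceilO (l : List ℕ) : ℕ := sumAlt (fun a => (a + 1) / 2) l

/-- `⌊O⌋(π) = ∑ ⌊λ_{2i−1}/2⌋`. -/
def floorO (l : List ℕ) : ℕ := sumAlt (fun a => a / 2) l

/-- `⌈E⌉(π) = ∑ ⌈λ_{2i}/2⌉`. -/
def ceilE (l : List ℕ) : ℕ := sumAlt (fun a => (a + 1) / 2) l.tail

/-- `⌊E⌋(π) = ∑ ⌊λ_{2i}/2⌋`. -/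
def floorE (l : List ℕ) : ℕ := sumAlt (fun a => a / 2) l.tail

/-- A partition: a weakly decreasing finite list of positive integers. -/
def IsPartition (l : List ℕ) : Prop := l.Pairwise (· ≥ ·) ∧ ∀ x ∈ l, 0 < x

/-- A partition into distinct parts: a strictly decreasing finite list of positive integers. -/
def IsDistinctPartition (l : List ℕ) : Prop := l.Pairwise (· > ·) ∧ ∀ x ∈ l, 0 < x

/-- The Gaussian binomial coefficient `[n choose k]_q` as a polynomial in `q`
(defined by the q-Pascal recurrence; it equals `(q;q)_n / ((q;q)_k (q;q)_{n−k})`). -/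
noncomputable def qbinom : ℕ → ℕ → Polynomial ℤ
  | _, 0 => 1
  | 0, _ + 1 => 0
  | n + 1, k + 1 => qbinom n k + Polynomial.X ^ (k + 1) * qbinom n (k + 1)


noncomputable section AuxSigned

open PowerSeries

/-- Sort a finset of naturals in (strictly) decreasing order. -/
def sortDesc (S : Finset ℕ) : List ℕ := S.sort (· ≥ ·)

lemma sortDesc_toFinset (S : Finset ℕ) : (sortDesc S).toFinset = S := by
  ext x; simp [sortDesc, List.mem_toFinset, Finset.mem_sort]

lemma sortDesc_sorted (S : Finset ℕ) : (sortDesc S).Pairwise (· ≥ ·) :=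
  Finset.pairwise_sort _ _

lemma sortDesc_nodup (S : Finset ℕ) : (sortDesc S).Nodup :=
  Finset.sort_nodup _ _

lemma mem_sortDesc {S : Finset ℕ} {x : ℕ} : x ∈ sortDesc S ↔ x ∈ S :=
  Finset.mem_sort _

lemma sortDesc_eq_of (l : List ℕ) (hs : l.Pairwise (· ≥ ·)) (hn : l.Nodup) :
    sortDesc l.toFinset = l :=
  List.Perm.eq_of_pairwise' (sortDesc_sorted _) hs
    (List.perm_of_nodup_nodup_toFinset_eq (sortDesc_nodup _) hn (sortDesc_toFinset _))

lemma sortDesc_insert (B : ℕ) (S : Finset ℕ) (h : ∀ x ∈ S, x < B) :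
    sortDesc (insert B S) = B :: sortDesc S := by
  have hB : B ∉ S := fun hc => lt_irrefl B (h B hc)
  have h1 : (B :: sortDesc S).toFinset = insert B S := by
    simp [List.toFinset_cons, sortDesc_toFinset]
  have hsorted : (B :: sortDesc S).Pairwise (· ≥ ·) := by
    rw [List.pairwise_cons]
    exact ⟨fun b hb => le_of_lt (h b (mem_sortDesc.mp hb)), sortDesc_sorted S⟩
  have hnodup : (B :: sortDesc S).Nodup :=
    List.nodup_cons.mpr ⟨fun hc => hB (mem_sortDesc.mp hc), sortDesc_nodup S⟩
  calc sortDesc (insert B S) = sortDesc (B :: sortDesc S).toFinset := by rw [h1]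
    _ = B :: sortDesc S := sortDesc_eq_of _ hsorted hnodup

lemma Osum_cons (a : ℕ) (l : List ℕ) : Osum (a :: l) = a + Esum l := by
  cases l <;> simp [Osum, Esum, sumAlt]

lemma Esum_cons (a : ℕ) (l : List ℕ) : Esum (a :: l) = Osum l := rfl

lemma ceilE_cons (a : ℕ) (l : List ℕ) : ceilE (a :: l) = ceilO l := rfl

lemma ceilO_cons (a : ℕ) (l : List ℕ) : ceilO (a :: l) = (a + 1) / 2 + ceilE l := by
  cases l <;> simp [ceilO, ceilE, sumAlt]

lemma le_Osum : ∀ (l : List ℕ), l.Pairwise (· > ·) → ∀ x ∈ l, x ≤ Osum l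
  | [], _, x, hx => by simp at hx
  | [a], _, x, hx => by
      simp at hx; subst hx; simp [Osum, sumAlt]
  | a :: b :: t, hs, x, hx => by
      have hst : t.Pairwise (· > ·) := (List.pairwise_cons.mp (List.pairwise_cons.mp hs).2).2
      have hab : a > b := (List.pairwise_cons.mp hs).1 b (by simp)
      have hOt : Osum (a :: b :: t) = a + Osum t := by simp [Osum, sumAlt]
      rw [hOt]
      rcases List.mem_cons.mp hx with rfl | hx
      · exact Nat.le_add_right x _
      rcases List.mem_cons.mp hx with rfl | hx
      · exact le_of_lt (lt_of_lt_of_le hab (Nat.le_add_right a _))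
      · exact le_trans (le_Osum t hst x hx) (Nat.le_add_left _ a)

/-- `∑_{S ⊆ {1,…,B}} (−1)^{⌈E⌉} q^{O}` over the descending lists of subsets. -/
def gps (B : ℕ) : PowerSeries ℤ :=
  ∑ S ∈ (Finset.Icc 1 B).powerset,
    PowerSeries.C (R := ℤ) ((-1) ^ (ceilE (sortDesc S))) * PowerSeries.X ^ (Osum (sortDesc S))

/-- `∑_{S ⊆ {1,…,B}} (−1)^{⌈O⌉} q^{E}` over the descending lists of subsets. -/
def kps (B : ℕ) : PowerSeries ℤ :=
  ∑ S ∈ (Finset.Icc 1 B).powerset,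
    PowerSeries.C (R := ℤ) ((-1) ^ (ceilO (sortDesc S))) * PowerSeries.X ^ (Esum (sortDesc S))

lemma Icc_one_succ (B : ℕ) : Finset.Icc 1 (B + 1) = insert (B + 1) (Finset.Icc 1 B) := by
  ext x; simp [Finset.mem_Icc]; omega

lemma not_mem_Icc_succ (B : ℕ) : (B + 1) ∉ Finset.Icc 1 B := by
  simp [Finset.mem_Icc]

lemma Icc_one_zero : Finset.Icc 1 0 = ∅ := by ext x; simp

lemma gps_zero : gps 0 = 1 := by
  rw [gps, Icc_one_zero, Finset.powerset_empty, Finset.sum_singleton]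
  simp [sortDesc, Finset.sort_empty, ceilE, Osum, sumAlt]

lemma kps_zero : kps 0 = 1 := by
  rw [kps, Icc_one_zero, Finset.powerset_empty, Finset.sum_singleton]
  simp [sortDesc, Finset.sort_empty, ceilO, Esum, sumAlt]

lemma gps_succ (B : ℕ) : gps (B + 1) = gps B + PowerSeries.X ^ (B + 1) * kps B := by
  unfold gps kps
  rw [Icc_one_succ, Finset.sum_powerset_insert (not_mem_Icc_succ B), Finset.mul_sum]
  congr 1
  refine Finset.sum_congr rfl fun S hS => ?_
  have hlt : ∀ x ∈ S, x < B + 1 := fun x hx => by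
    have := Finset.mem_Icc.mp (Finset.mem_powerset.mp hS hx); omega
  rw [sortDesc_insert _ _ hlt, Osum_cons, ceilE_cons, pow_add]
  ring

lemma kps_succ (B : ℕ) :
    kps (B + 1) = kps B + PowerSeries.C (R := ℤ) ((-1) ^ ((B + 2) / 2)) * gps B := by
  unfold gps kps
  rw [Icc_one_succ, Finset.sum_powerset_insert (not_mem_Icc_succ B), Finset.mul_sum]
  congr 1
  refine Finset.sum_congr rfl fun S hS => ?_
  have hlt : ∀ x ∈ S, x < B + 1 := fun x hx => by
    have := Finset.mem_Icc.mp (Finset.mem_powerset.mp hS hx); omega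
  rw [sortDesc_insert _ _ hlt, Esum_cons, ceilO_cons, pow_add, map_mul]
  ring

/-- The partial products `∏_{j=0}^{m} (1 + (−1)^j q^{2j+1})`. -/
def Qs (m : ℕ) : PowerSeries ℤ :=
  ∏ j ∈ Finset.range (m + 1), (1 + PowerSeries.C (R := ℤ) ((-1) ^ j) * PowerSeries.X ^ (2 * j + 1))

lemma Qs_succ (m : ℕ) :
    Qs (m + 1) = Qs m * (1 + PowerSeries.C (R := ℤ) ((-1) ^ (m + 1)) * PowerSeries.X ^ (2 * (m + 1) + 1)) := by
  simp only [Qs, Finset.prod_range_succ]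

lemma gk_odd : ∀ m : ℕ, gps (2 * m + 1) = Qs m ∧ kps (2 * m + 1) = 0 := by
  intro m
  induction m with
  | zero =>
    constructor
    · show gps (0 + 1) = Qs 0
      rw [gps_succ, gps_zero, kps_zero, Qs]
      simp
    · show kps (0 + 1) = 0
      rw [kps_succ, gps_zero, kps_zero]
      norm_num
  | succ m ih =>
    obtain ⟨hg, hk⟩ := ih
    have hg2 : gps (2 * m + 1 + 1) = Qs m := by
      rw [gps_succ, hg, hk]; ring
    have hk2 : kps (2 * m + 1 + 1) = PowerSeries.C (R := ℤ) ((-1) ^ (m + 1)) * Qs m := by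
      rw [kps_succ, hg, hk, show (2 * m + 1 + 2) / 2 = m + 1 by omega]
      ring
    have e1 : 2 * (m + 1) + 1 = (2 * m + 1 + 1) + 1 := by ring
    constructor
    · rw [e1, gps_succ, hg2, hk2, Qs_succ]
      ring
    · rw [e1, kps_succ, hg2, hk2, show (2 * m + 1 + 1 + 2) / 2 = m + 2 by omega,
        show ((-1 : ℤ)) ^ (m + 2) = -((-1) ^ (m + 1)) by ring, map_neg]
      ring

lemma Qs_odd (n : ℕ) : Qs (2 * n + 1) =
    ∏ i ∈ Finset.range (n + 1),
      (1 + PowerSeries.X ^ (4 * i + 1)) * (1 - PowerSeries.X ^ (4 * i + 3)) := by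
  induction n with
  | zero =>
    rw [show 2 * 0 + 1 = 0 + 1 by ring, Qs_succ, Qs, Finset.prod_range_one,
      Finset.prod_range_one]
    have h1 : ((-1 : ℤ)) ^ (0 : ℕ) = 1 := by norm_num
    have h2 : ((-1 : ℤ)) ^ (0 + 1 : ℕ) = -1 := by norm_num
    rw [h1, h2, map_one, map_neg, map_one]
    ring_nf
  | succ n ih =>
    rw [show 2 * (n + 1) + 1 = (2 * n + 1) + 1 + 1 by ring, Qs_succ, Qs_succ, ih]
    conv_rhs => rw [Finset.prod_range_succ]
    have h1 : ((-1 : ℤ)) ^ (2 * n + 1 + 1) = 1 := Even.neg_one_pow ⟨n + 1, by ring⟩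
    have h2 : ((-1 : ℤ)) ^ (2 * n + 1 + 1 + 1) = -1 := Odd.neg_one_pow ⟨n + 1, by ring⟩
    rw [h1, h2, map_one, map_neg, map_one,
      show 2 * (2 * n + 1 + 1) + 1 = 4 * (n + 1) + 1 by ring,
      show 2 * (2 * n + 1 + 1 + 1) + 1 = 4 * (n + 1) + 3 by ring]
    ring

lemma coeff_gps (n B : ℕ) :
    PowerSeries.coeff (R := ℤ) n (gps B)
      = ∑ S ∈ (Finset.Icc 1 B).powerset.filter (fun S => Osum (sortDesc S) = n),
          (-1 : ℤ) ^ (ceilE (sortDesc S)) := by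
  classical
  rw [gps, map_sum, Finset.sum_filter]
  refine Finset.sum_congr rfl fun S _ => ?_
  rw [PowerSeries.coeff_C_mul, PowerSeries.coeff_X_pow]
  rcases eq_or_ne (Osum (sortDesc S)) n with h | h
  · simp [h]
  · simp [h, Ne.symm h]

end AuxSigned

/-- `∑_{π ∈ D} (−1)^{⌈E⌉(π)} q^{O(π)} = (−q; q⁴)_∞ (q³; q⁴)_∞` in `ℤ⟦q⟧`: for every `n`,
the signed count over partitions into distinct parts with `O(π) = n` equals the coefficient
of `q^n` in `∏_{i≥0} (1 + q^{4i+1})(1 − q^{4i+3})` (truncating the product at `i ≤ n`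
does not change this coefficient, since further factors only affect higher coefficients). -/
theorem signed_ceilE_distinct (n : ℕ) :
    (∑ᶠ l ∈ {l : List ℕ | IsDistinctPartition l ∧ Osum l = n}, ((-1 : ℤ)) ^ ceilE l)
    = PowerSeries.coeff (R := ℤ) n (∏ i ∈ Finset.range (n + 1),
        (1 + PowerSeries.X ^ (4 * i + 1)) * (1 - PowerSeries.X ^ (4 * i + 3))) := by
  classical
  have hset : {l : List ℕ | IsDistinctPartition l ∧ Osum l = n}
      = ↑(((Finset.Icc 1 (4 * n + 3)).powerset.filter
            (fun S => Osum (sortDesc S) = n)).image sortDesc) := by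
    ext l
    simp only [Set.mem_setOf_eq, Finset.coe_image, Set.mem_image, Finset.mem_coe,
      Finset.mem_filter, Finset.mem_powerset]
    constructor
    · rintro ⟨⟨hsort, hpos⟩, hO⟩
      have hnd : l.Nodup := hsort.imp (fun h => ne_of_gt h)
      have hge : l.Pairwise (· ≥ ·) := hsort.imp (fun h => le_of_lt h)
      have hl : sortDesc l.toFinset = l := sortDesc_eq_of l hge hnd
      refine ⟨l.toFinset, ⟨?_, by rw [hl]; exact hO⟩, hl⟩
      intro x hx
      rw [List.mem_toFinset] at hx
      rw [Finset.mem_Icc]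
      refine ⟨hpos x hx, ?_⟩
      have := le_Osum l hsort x hx
      omega
    · rintro ⟨S, ⟨hSsub, hSO⟩, rfl⟩
      refine ⟨⟨?_, ?_⟩, hSO⟩
      · have h3 : List.Pairwise (fun a b => a ≥ b ∧ a ≠ b) (sortDesc S) :=
          (sortDesc_sorted S).and (sortDesc_nodup S)
        exact h3.imp (fun h => h.1.lt_of_ne (Ne.symm h.2))
      · intro x hx
        have := hSsub (mem_sortDesc.mp hx)
        exact (Finset.mem_Icc.mp this).1
  rw [hset, finsum_mem_coe_finset,
    Finset.sum_image (fun S _ S' _ h => by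
      have := congrArg List.toFinset h
      rwa [sortDesc_toFinset, sortDesc_toFinset] at this),
    ← coeff_gps n (4 * n + 3),
    show (4 * n + 3 : ℕ) = 2 * (2 * n + 1) + 1 by ring,
    (gk_odd (2 * n + 1)).1, Qs_odd]
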